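/- Let M ⊆ H be a matching, let i_0 ∈ P be a player not occurring in any edge of M, and let A ⊆ H \ M be a finite set of addable edges whose resource sets are pairwise disjoint, such that every e ∈ A is blocked (B(e) ≠ ∅) and every edge of M intersects, in resources, the resource set of at most one edge of A. If the configuration LP at value τ is feasible, then there exists an edge (i, C) ∈ H \ M with i ∈ B_P ∪ {i_0} and C ∩ (A_R ∪ B_R) = ∅; that is, a new addable edge always exists. -/

import Mathlib

set_option linter.unusedSectionVars false
set_option maxHeartbeats 1000000

set_option linter.unusedSectionVars false

namespace SantaAux

/-- The dual weight function: `min (2a/(5t)) (1/3)`. -/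
noncomputable def yw (t a : ℝ) : ℝ := min (2*a/(5*t)) (1/3)

lemma yw_nonneg {t a : ℝ} (ht : 0 < t) (ha : 0 ≤ a) : 0 ≤ yw t a := by
  unfold yw; positivity

lemma yw_le_third {t a : ℝ} : yw t a ≤ 1/3 := min_le_right _ _

lemma yw_le_lin {t a : ℝ} : yw t a ≤ 2*a/(5*t) := min_le_left _ _

lemma yw_eq_third {t a : ℝ} (ht : 0 < t) (h : 5*t/6 ≤ a) : yw t a = 1/3 := by
  unfold yw
  rw [min_eq_right]
  rw [div_le_div_iff₀ (by norm_num) (by positivity)] at *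
  nlinarith

lemma yw_eq_lin {t a : ℝ} (ht : 0 < t) (h : a ≤ 5*t/6) : yw t a = 2*a/(5*t) := by
  unfold yw
  rw [min_eq_left]
  rw [div_le_div_iff₀ (by positivity) (by norm_num)]
  nlinarith

variable {R : Type*} [DecidableEq R] (v : R → ℝ) (t : ℝ)

/-- Total weight of a finset of resources. -/
noncomputable def Yf (S : Finset R) : ℝ := ∑ j ∈ S, yw t (v j)

/-- `S` is minimal for threshold `t`. -/
def IsMin (S : Finset R) : Prop :=
  t ≤ ∑ j ∈ S, v j ∧ ∀ S' ⊂ S, ∑ j ∈ S', v j < t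

/-- All resources of `S` are thin. -/
def Thin (S : Finset R) : Prop := ∀ j ∈ S, v j < t

variable {v t}

lemma Yf_apply (v : R → ℝ) (t : ℝ) (S : Finset R) : Yf v t S = ∑ j ∈ S, yw t (v j) := rfl

lemma Yf_nonneg (hv : ∀ j, 0 < v j) (ht : 0 < t) (S : Finset R) : 0 ≤ Yf v t S :=
  Finset.sum_nonneg fun j _ => yw_nonneg ht (hv j).le

lemma Yf_mono (hv : ∀ j, 0 < v j) (ht : 0 < t) {S S' : Finset R} (h : S ⊆ S') :
    Yf v t S ≤ Yf v t S' :=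
  Finset.sum_le_sum_of_subset_of_nonneg h fun j _ _ => yw_nonneg ht (hv j).le

lemma Yf_le_card (S : Finset R) : Yf v t S ≤ (S.card : ℝ)/3 := by
  calc Yf v t S ≤ ∑ _j ∈ S, (1/3 : ℝ) := Finset.sum_le_sum fun j _ => yw_le_third
  _ = (S.card : ℝ)/3 := by rw [Finset.sum_const]; push_cast; ring

lemma Yf_le_val (ht : 0 < t) (S : Finset R) : Yf v t S ≤ 2*(∑ j ∈ S, v j)/(5*t) := by
  calc Yf v t S ≤ ∑ j ∈ S, 2*(v j)/(5*t) := Finset.sum_le_sum fun j _ => yw_le_lin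
  _ = 2*(∑ j ∈ S, v j)/(5*t) := by rw [Finset.mul_sum, Finset.sum_div]

/-- Every set of value at least `t` contains a minimal subset. -/
lemma exists_minimal (C : Finset R) (hC : t ≤ ∑ j ∈ C, v j) :
    ∃ C' ⊆ C, IsMin v t C' := by
  induction C using Finset.strongInduction with
  | _ C ih =>
    by_cases h : ∀ S' ⊂ C, ∑ j ∈ S', v j < t
    · exact ⟨C, Finset.Subset.refl C, hC, h⟩
    · push_neg at h
      obtain ⟨S', hS', hval⟩ := h
      obtain ⟨C', hsub, hmin⟩ := ih S' hS' hval
      exact ⟨C', hsub.trans hS'.subset, hmin⟩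

lemma val_lt_add (hmin : IsMin v t S) {j : R} (hj : j ∈ S) :
    ∑ i ∈ S, v i < t + v j := by
  have h := hmin.2 (S.erase j) (Finset.erase_ssubset hj)
  have := Finset.add_sum_erase S v hj
  linarith

lemma pair_lt (hmin : IsMin v t S) (h3 : 3 ≤ S.card) {j₁ j₂ : R}
    (hj₁ : j₁ ∈ S) (hj₂ : j₂ ∈ S) (hne : j₁ ≠ j₂) : v j₁ + v j₂ < t := by
  have hsub : ({j₁, j₂} : Finset R) ⊂ S := by
    rw [Finset.ssubset_iff_subset_ne]
    constructor
    · intro x hx; simp at hx; rcases hx with h | h <;> subst h <;> assumption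
    · intro h
      rw [← h] at h3
      have := Finset.card_insert_le j₁ ({j₂} : Finset R)
      simp at this h3; omega
  have := hmin.2 _ hsub
  rwa [Finset.sum_pair hne] at this

end SantaAux
set_option linter.unusedSectionVars false
set_option maxHeartbeats 1000000

namespace SantaAuxB

open SantaAux

variable {R : Type*} [DecidableEq R] {v : R → ℝ} {t : ℝ}

lemma card_ge_two (hv : ∀ j, 0 < v j) (ht : 0 < t) {S : Finset R}
    (hmin : IsMin v t S) (hthin : Thin v t S) : 2 ≤ S.card := by
  by_contra h
  push_neg at h
  interval_cases hc : S.card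
  · rw [Finset.card_eq_zero] at hc
    subst hc
    have := hmin.1
    simp at this
    linarith
  · obtain ⟨j, hj⟩ := Finset.card_eq_one.mp hc
    subst hj
    have := hmin.1
    simp at this
    exact absurd (hthin j (by simp)) (not_lt.mpr this)

lemma edge_le (hv : ∀ j, 0 < v j) (ht : 0 < t) {S : Finset R}
    (hmin : IsMin v t S) (hthin : Thin v t S) :
    Yf v t S ≤ 2/3 ∧ (3/5 < Yf v t S →
      ∃ j₁ ∈ S, ∃ j₂ ∈ S, j₁ ≠ j₂ ∧ S = {j₁, j₂} ∧ 2*t/3 < v j₁ ∧ 2*t/3 < v j₂) := by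
  have h2 := card_ge_two hv ht hmin hthin
  rcases eq_or_lt_of_le h2 with hc2 | hc3
  · -- exactly two elements
    obtain ⟨j₁, j₂, hne, hSeq⟩ := Finset.card_eq_two.mp hc2.symm
    subst hSeq
    have hYeq : Yf v t {j₁, j₂} = yw t (v j₁) + yw t (v j₂) := Finset.sum_pair hne
    constructor
    · rw [hYeq]
      have := yw_le_third (t := t) (a := v j₁)
      have := yw_le_third (t := t) (a := v j₂)
      linarith
    · intro hY
      refine ⟨j₁, by simp, j₂, by simp, hne, rfl, ?_, ?_⟩
      · have h1 : (4:ℝ)/15 < yw t (v j₁) := by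
          have := yw_le_third (t := t) (a := v j₂); rw [hYeq] at hY; linarith
        have h2 := yw_le_lin (t := t) (a := v j₁)
        have h3 : (4:ℝ)/15 < 2 * v j₁ / (5*t) := lt_of_lt_of_le h1 h2
        rw [lt_div_iff₀ (by positivity)] at h3
        linarith
      · have h1 : (4:ℝ)/15 < yw t (v j₂) := by
          have := yw_le_third (t := t) (a := v j₁); rw [hYeq] at hY; linarith
        have h2 := yw_le_lin (t := t) (a := v j₂)
        have h3 : (4:ℝ)/15 < 2 * v j₂ / (5*t) := lt_of_lt_of_le h1 h2
        rw [lt_div_iff₀ (by positivity)] at h3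
        linarith
  · -- at least three elements
    have hcard3 : 3 ≤ S.card := hc3
    have hmain : Yf v t S ≤ 3/5 := by
      by_cases hp : ∃ p ∈ S, t/2 < v p
      · obtain ⟨p, hpS, hvp⟩ := hp
        have herase : ∀ q ∈ S.erase p, v q < t - v p := by
          intro q hq
          have hqS := Finset.mem_of_mem_erase hq
          have hqp := Finset.ne_of_mem_erase hq
          have := pair_lt hmin hcard3 hqS hpS hqp
          linarith
        have hYsplit : Yf v t S = yw t (v p) + Yf v t (S.erase p) :=
          (Finset.add_sum_erase S _ hpS).symm
        have hvsplit : ∑ j ∈ S, v j = v p + ∑ j ∈ S.erase p, v j :=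
          (Finset.add_sum_erase S v hpS).symm
        have hYe : Yf v t (S.erase p) = 2*(∑ j ∈ S.erase p, v j)/(5*t) := by
          unfold Yf
          rw [Finset.sum_congr rfl fun j hj => yw_eq_lin ht (by
            have := herase j hj; linarith)]
          rw [Finset.mul_sum, Finset.sum_div]
        have hene : (S.erase p).Nonempty := by
          rw [← Finset.card_pos, Finset.card_erase_of_mem hpS]; omega
        obtain ⟨j₀, hj₀⟩ := hene
        have h1 : ∑ j ∈ S, v j < t + v j₀ := val_lt_add hmin (Finset.mem_of_mem_erase hj₀)
        have h2 : v j₀ < t - v p := herase j₀ hj₀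
        have hve : ∑ j ∈ S.erase p, v j < 2*t - 2*(v p) := by linarith
        have hvepos : (0:ℝ) ≤ ∑ j ∈ S.erase p, v j :=
          Finset.sum_nonneg fun j _ => (hv j).le
        rcases le_or_gt (v p) (5*t/6) with hlin | hbig
        · rw [hYsplit, hYe, yw_eq_lin ht hlin]
          rw [← add_div, div_le_iff₀ (by positivity)]
          nlinarith
        · rw [hYsplit, hYe, yw_eq_third ht hbig.le]
          have : 2*(∑ j ∈ S.erase p, v j)/(5*t) ≤ 2/15 := by
            rw [div_le_iff₀ (by positivity)]
            nlinarith
          linarith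
      · push_neg at hp
        have hYe : Yf v t S = 2*(∑ j ∈ S, v j)/(5*t) := by
          unfold Yf
          rw [Finset.sum_congr rfl fun j hj => yw_eq_lin ht (by
            have := hp j hj; linarith)]
          rw [Finset.mul_sum, Finset.sum_div]
        have hne : S.Nonempty := by rw [← Finset.card_pos]; omega
        obtain ⟨j₀, hj₀⟩ := hne
        have h1 : ∑ j ∈ S, v j < t + v j₀ := val_lt_add hmin hj₀
        have h2 := hp j₀ hj₀
        rw [hYe, div_le_iff₀ (by positivity)]
        nlinarith
    exact ⟨by linarith, fun h => absurd h (by linarith)⟩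

/-- Payment lemma: any all-thin set of value at least `17t/6` has weight at least 1. -/
lemma payment (hv : ∀ j, 0 < v j) (ht : 0 < t) {S : Finset R}
    (hthin : ∀ j ∈ S, v j ≤ t) (hval : 17*t/6 ≤ ∑ j ∈ S, v j) :
    1 ≤ Yf v t S := by
  classical
  set H := S.filter (fun j => 5*t/6 ≤ v j) with hH
  have hYH : Yf v t H = (H.card : ℝ)/3 := by
    unfold Yf
    rw [Finset.sum_congr rfl fun j hj => yw_eq_third ht (Finset.mem_filter.mp hj).2]
    rw [Finset.sum_const]; push_cast; ring
  rcases le_or_gt 3 H.card with h3 | h3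
  · have hsub : Yf v t H ≤ Yf v t S := Yf_mono hv ht (Finset.filter_subset _ _)
    have : (3:ℝ) ≤ (H.card : ℝ) := by exact_mod_cast h3
    rw [hYH] at hsub; linarith
  · have hsplit : Yf v t S = Yf v t H + Yf v t (S.filter (fun j => ¬ 5*t/6 ≤ v j)) :=
      (Finset.sum_filter_add_sum_filter_not S _ _).symm
    set L := S.filter (fun j => ¬ 5*t/6 ≤ v j) with hL
    have hYL : Yf v t L = 2*(∑ j ∈ L, v j)/(5*t) := by
      unfold Yf
      rw [Finset.sum_congr rfl fun j hj => yw_eq_lin ht (by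
        have := (Finset.mem_filter.mp hj).2; push_neg at this; linarith)]
      rw [Finset.mul_sum, Finset.sum_div]
    have hvsplit : ∑ j ∈ S, v j = ∑ j ∈ H, v j + ∑ j ∈ L, v j :=
      (Finset.sum_filter_add_sum_filter_not S _ _).symm
    have hvH : ∑ j ∈ H, v j ≤ (H.card : ℝ) * t := by
      calc ∑ j ∈ H, v j ≤ ∑ _j ∈ H, t :=
        Finset.sum_le_sum fun j hj => hthin j (Finset.filter_subset _ _ hj)
      _ = (H.card : ℝ) * t := by rw [Finset.sum_const]; push_cast; ring
    have hk : (H.card : ℝ) ≤ 2 := by exact_mod_cast Nat.lt_succ_iff.mp h3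
    have hk0 : (0:ℝ) ≤ (H.card : ℝ) := by positivity
    rw [hsplit, hYH, hYL]
    rw [div_add_div _ _ (by norm_num) (by positivity), le_div_iff₀ (by positivity)]
    nlinarith
end SantaAuxB
namespace SantaAuxB

variable {R : Type*} [DecidableEq R] {v : R → ℝ} {t : ℝ}

/-- Key lemma: if minimal thin edges `E` and `E'` intersect, then
`Yf (E \ E') + Yf E' ≤ 1`. -/
lemma key_overlap (hv : ∀ j, 0 < v j) (ht : 0 < t) {E E' : Finset R}
    (hE : SantaAux.IsMin v t E) (hEt : SantaAux.Thin v t E)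
    (hE' : SantaAux.IsMin v t E') (hE't : SantaAux.Thin v t E')
    (hT : (E ∩ E').Nonempty) :
    SantaAux.Yf v t (E \ E') + SantaAux.Yf v t E' ≤ 1 := by
  have hedge := edge_le hv ht hE' hE't
  rcases le_or_gt (SantaAux.Yf v t E') (3/5) with hb | hb
  · -- blockers pay at most 3/5; the residue is a proper subset of `E`, value < t
    have hssub : E \ E' ⊂ E := by
      obtain ⟨q, hq⟩ := hT
      rw [Finset.mem_inter] at hq
      refine Finset.ssubset_iff_of_subset (Finset.sdiff_subset) |>.mpr ?_
      exact ⟨q, hq.1, by simp [hq.2]⟩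
    have hval : ∑ j ∈ E \ E', v j < t := hE.2 _ hssub
    have hY := SantaAux.Yf_le_val (v := v) ht (E \ E')
    have h25 : (2 * ∑ j ∈ E \ E', v j)/(5*t) ≤ 2/5 := by
      rw [div_le_div_iff₀ (by positivity) (by norm_num)]
      nlinarith
    linarith
  · obtain ⟨j₁, hj₁, j₂, hj₂, hne, hSeq, hv₁, hv₂⟩ := hedge.2 hb
    rcases le_or_gt (E \ E').card 1 with hc | hc
    · -- small residue: at most one resource, weight ≤ 1/3
      have h1 := SantaAux.Yf_le_card (v := v) (t := t) (E \ E')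
      have h2 : ((E \ E').card : ℝ) ≤ 1 := by exact_mod_cast hc
      have := hedge.1
      linarith
    · -- big residue: the shared resource is one of the two big ones of `E'`
      obtain ⟨q, hq⟩ := hT
      rw [Finset.mem_inter] at hq
      obtain ⟨hqE, hqE'⟩ := hq
      have hvq : 2*t/3 < v q := by
        rw [hSeq, Finset.mem_insert, Finset.mem_singleton] at hqE'
        rcases hqE' with h | h <;> subst h <;> assumption
      have hcard3 : 3 ≤ E.card := by
        have hsub : insert q (E \ E') ⊆ E := by
          intro x hx
          rw [Finset.mem_insert] at hx
          rcases hx with h | h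
          · subst h; exact hqE
          · exact (Finset.mem_sdiff.mp h).1
        have hcardi : (insert q (E \ E')).card = (E \ E').card + 1 := by
          rw [Finset.card_insert_of_notMem (by simp [hqE'])]
        have := Finset.card_le_card hsub
        omega
      have hsmall : ∀ r ∈ E, r ≠ q → v r < t/3 := by
        intro r hr hrq
        have := SantaAux.pair_lt hE hcard3 hr hqE hrq
        linarith
      -- bound the residue value by 2t/3
      have hEne : (E \ E').Nonempty := by rw [← Finset.card_pos]; omega
      obtain ⟨j₀, hj₀⟩ := hEne
      have hj₀E : j₀ ∈ E := (Finset.mem_sdiff.mp hj₀).1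
      have hj₀q : j₀ ≠ q := by
        intro h; subst h; exact (Finset.mem_sdiff.mp hj₀).2 hqE'
      have h1 : ∑ j ∈ E, v j < t + v j₀ := SantaAux.val_lt_add hE hj₀E
      have h2 : v j₀ < t/3 := hsmall j₀ hj₀E hj₀q
      have hressub : E \ E' ⊆ E.erase q := by
        intro x hx
        rw [Finset.mem_erase]
        refine ⟨?_, (Finset.mem_sdiff.mp hx).1⟩
        intro h; subst h; exact (Finset.mem_sdiff.mp hx).2 hqE'
      have hres : ∑ j ∈ E \ E', v j ≤ ∑ j ∈ E.erase q, v j :=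
        Finset.sum_le_sum_of_subset_of_nonneg hressub fun j _ _ => (hv j).le
      have herase : ∑ j ∈ E.erase q, v j = ∑ j ∈ E, v j - v q := by
        have := Finset.add_sum_erase E v hqE
        linarith
      have hresval : ∑ j ∈ E \ E', v j < 2*t/3 := by
        rw [herase] at hres
        linarith
      have hY := SantaAux.Yf_le_val (v := v) ht (E \ E')
      have h415 : (2 * ∑ j ∈ E \ E', v j)/(5*t) ≤ 4/15 := by
        rw [div_le_div_iff₀ (by positivity) (by norm_num)]
        nlinarith
      have := hedge.1
      linarith

end SantaAuxB

open SantaAux SantaAuxB in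
/-- Let `α = 23/6` and `t = τ/α`.  Hyperedges are pairs `(i, C)` with `i ∈ P` and
`C ⊆ Rof i` minimal for threshold `t` (i.e. `∑ j ∈ C, v j ≥ t` and every
proper subset has value `< t`).  Let `M` be a matching (distinct players,
pairwise disjoint resource sets), `i₀` a player not occurring in `M`, and `A`
a set of addable edges (edges not in `M`) with pairwise disjoint resource
sets, such that every `e ∈ A` is blocked (some edge of `M` meets its resource
set) and every edge of `M` meets the resource set of at most one edge of `A`.
The blocking edges are `B = {e' ∈ M : ∃ e ∈ A, e'.2 ∩ e.2 ≠ ∅}`.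

If the configuration LP at value `τ` is feasible, then there exists an edge
`(i, C)` of the hypergraph, not in `M`, with `i ∈ B_P ∪ {i₀}` and
`C ∩ (A_R ∪ B_R) = ∅`; that is, a new addable edge always exists. -/
theorem santa_claus_addable_edge_exists
    {P R : Type*} [Fintype P] [Fintype R] [DecidableEq P] [DecidableEq R]
    (v : R → ℝ) (hv : ∀ j, 0 < v j) (Rof : P → Finset R)
    (τ : ℝ) (hτ : 0 < τ)
    (M A : Finset (P × Finset R)) (i₀ : P)
    -- `M ⊆ H` : every edge of `M` is a hyperedge
    (hM_edge : ∀ e ∈ M, e.2 ⊆ Rof e.1 ∧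
      τ / (23 / 6) ≤ ∑ j ∈ e.2, v j ∧
      ∀ C' ⊂ e.2, ∑ j ∈ C', v j < τ / (23 / 6))
    -- `M` is a matching
    (hM_match : ∀ e₁ ∈ M, ∀ e₂ ∈ M, e₁ ≠ e₂ →
      e₁.1 ≠ e₂.1 ∧ Disjoint e₁.2 e₂.2)
    -- `i₀` does not occur in any edge of `M`
    (hi₀ : ∀ e ∈ M, e.1 ≠ i₀)
    -- `A ⊆ H \ M`
    (hA_edge : ∀ e ∈ A, (e.2 ⊆ Rof e.1 ∧
      τ / (23 / 6) ≤ ∑ j ∈ e.2, v j ∧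
      ∀ C' ⊂ e.2, ∑ j ∈ C', v j < τ / (23 / 6)) ∧ e ∉ M)
    -- the resource sets of the edges of `A` are pairwise disjoint
    (hA_disj : ∀ e₁ ∈ A, ∀ e₂ ∈ A, e₁ ≠ e₂ → Disjoint e₁.2 e₂.2)
    -- every `e ∈ A` is blocked: `B(e) ≠ ∅`
    (hblocked : ∀ e ∈ A, ∃ e' ∈ M, (e'.2 ∩ e.2).Nonempty)
    -- every edge of `M` meets the resources of at most one edge of `A`
    (hone : ∀ e' ∈ M, ∀ e₁ ∈ A, ∀ e₂ ∈ A,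
      (e'.2 ∩ e₁.2).Nonempty → (e'.2 ∩ e₂.2).Nonempty → e₁ = e₂)
    -- the configuration LP at value `τ` is feasible
    (hfeas : ∃ x : P → Finset R → ℝ,
        (∀ i C, 0 ≤ x i C) ∧
        (∀ i C, ¬ (C ⊆ Rof i ∧ τ ≤ ∑ j ∈ C, v j) → x i C = 0) ∧
        (∀ i : P, 1 ≤ ∑ C : Finset R, x i C) ∧
        (∀ j : R, ∑ i : P, ∑ C ∈ Finset.univ.filter (fun C : Finset R => j ∈ C),
          x i C ≤ 1)) :
    ∃ (i : P) (C : Finset R),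
      -- `(i, C)` is a hyperedge not in `M`
      C ⊆ Rof i ∧
      τ / (23 / 6) ≤ ∑ j ∈ C, v j ∧
      (∀ C' ⊂ C, ∑ j ∈ C', v j < τ / (23 / 6)) ∧
      (i, C) ∉ M ∧
      -- `i ∈ B_P ∪ {i₀}`
      (i = i₀ ∨ ∃ e' ∈ M, (∃ e ∈ A, (e'.2 ∩ e.2).Nonempty) ∧ e'.1 = i) ∧
      -- `C ∩ A_R = ∅`
      (∀ e ∈ A, Disjoint C e.2) ∧
      -- `C ∩ B_R = ∅`
      (∀ e' ∈ M, (∃ e ∈ A, (e'.2 ∩ e.2).Nonempty) → Disjoint C e'.2) := by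
    classical
  by_contra hno
  obtain ⟨x, hx0, hxvan, hxcov, hxcap⟩ := hfeas
  set t : ℝ := τ / (23/6) with htdef
  have ht : 0 < t := by rw [htdef]; positivity
  have htτ : τ = 23*t/6 := by rw [htdef]; ring
  -- minimality of the edges of `M` and `A`
  have hMmin : ∀ e ∈ M, IsMin v t e.2 := fun e he => ⟨(hM_edge e he).2.1, (hM_edge e he).2.2⟩
  have hAmin : ∀ e ∈ A, IsMin v t e.2 := fun e he => ⟨((hA_edge e he).1).2.1, ((hA_edge e he).1).2.2⟩
  -- the blocking edges and the resource sets
  set B : Finset (P × Finset R) := M.filter (fun e' => ∃ e ∈ A, (e'.2 ∩ e.2).Nonempty) with hBdef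
  set XA : Finset R := A.biUnion (fun e => e.2) with hXAdef
  set XB : Finset R := B.biUnion (fun e => e.2) with hXBdef
  set X : Finset R := XA ∪ XB with hXdef
  -- distilled "no addable edge" statement
  have hnoadd : ∀ i C, C ⊆ Rof i → (i = i₀ ∨ ∃ e' ∈ B, e'.1 = i) →
      IsMin v t C → Disjoint C X → False := by
    intro i C hCR hi hmin hdisj
    have hCne : C.Nonempty := by
      rw [Finset.nonempty_iff_ne_empty]
      intro h
      have := hmin.1
      rw [h] at this
      simp at this
      linarith
    apply hno
    refine ⟨i, C, hCR, hmin.1, hmin.2, ?_, ?_, ?_, ?_⟩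
    · -- (i, C) ∉ M
      intro hiM
      rcases hi with h | ⟨e', he'B, he'1⟩
      · exact hi₀ (i, C) hiM h
      · have he'M : e' ∈ M := (Finset.mem_filter.mp he'B).1
        by_cases heq : (i, C) = e'
        · obtain ⟨j, hj⟩ := hCne
          have hjX : j ∈ X := by
            rw [hXdef, Finset.mem_union]
            right
            rw [hXBdef, Finset.mem_biUnion]
            exact ⟨e', he'B, by rw [← heq]; exact hj⟩
          exact absurd hjX (Finset.disjoint_left.mp hdisj hj)
        · exact (hM_match (i, C) hiM e' he'M heq).1 he'1.symm
    · -- membership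
      rcases hi with h | ⟨e', he'B, he'1⟩
      · exact Or.inl h
      · exact Or.inr ⟨e', (Finset.mem_filter.mp he'B).1, (Finset.mem_filter.mp he'B).2, he'1⟩
    · -- disjoint from A resources
      intro e heA
      refine hdisj.mono_right ?_
      intro j hj
      rw [hXdef, Finset.mem_union]
      exact Or.inl (by rw [hXAdef, Finset.mem_biUnion]; exact ⟨e, heA, hj⟩)
    · -- disjoint from B resources
      intro e' he'M hcond
      refine hdisj.mono_right ?_
      intro j hj
      rw [hXdef, Finset.mem_union]
      right
      rw [hXBdef, Finset.mem_biUnion]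
      exact ⟨e', Finset.mem_filter.mpr ⟨he'M, hcond⟩, hj⟩
  -- every candidate configuration has small value outside X
  have hsmall : ∀ i, (i = i₀ ∨ ∃ e' ∈ B, e'.1 = i) → ∀ C, C ⊆ Rof i →
      ∑ j ∈ C \ X, v j < t := by
    intro i hi C hC
    by_contra hbig
    push_neg at hbig
    obtain ⟨C', hC'sub, hC'min⟩ := exists_minimal (v := v) (t := t) (C \ X) hbig
    refine hnoadd i C' (hC'sub.trans ((Finset.sdiff_subset).trans hC)) hi hC'min ?_
    intro Y hY1 hY2 j hj
    have := hC'sub (hY1 hj)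
    simp only [Finset.mem_sdiff] at this
    exact absurd (hY2 hj) (by simpa using this.2)
  -- fat and thin resources of X
  set Fat : Finset R := X.filter (fun j => t ≤ v j) with hFatdef
  set Xt : Finset R := X.filter (fun j => v j < t) with hXtdef
  -- a minimal set containing a fat resource is that singleton
  have hsing : ∀ (D : Finset R), IsMin v t D → ∀ j ∈ D, t ≤ v j → D = {j} := by
    intro D hD j hj hfat
    by_contra hne
    have hsub : ({j} : Finset R) ⊂ D :=
      Finset.ssubset_iff_subset_ne.mpr ⟨Finset.singleton_subset_iff.mpr hj, fun h => hne h.symm⟩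
    have := hD.2 _ hsub
    simp at this
    linarith
  -- every fat resource of X is the resource set of a (fat) blocking edge
  have hfatB : ∀ j ∈ Fat, ∃ e' ∈ B, e'.2 = {j} := by
    intro j hj
    rw [hFatdef, Finset.mem_filter] at hj
    obtain ⟨hjX, hjfat⟩ := hj
    rw [hXdef, Finset.mem_union] at hjX
    rcases hjX with hjA | hjB
    · rw [hXAdef, Finset.mem_biUnion] at hjA
      obtain ⟨e, heA, hje⟩ := hjA
      have hesing := hsing e.2 (hAmin e heA) j hje hjfat
      obtain ⟨e'', he''M, hmeet⟩ := hblocked e heA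
      have he''B : e'' ∈ B := Finset.mem_filter.mpr ⟨he''M, ⟨e, heA, hmeet⟩⟩
      obtain ⟨j', hj'⟩ := hmeet
      rw [Finset.mem_inter] at hj'
      have hj'j : j' = j := by
        have := hj'.2
        rw [hesing] at this
        simpa using this
      subst hj'j
      exact ⟨e'', he''B, hsing e''.2 (hMmin e'' he''M) j' hj'.1 hjfat⟩
    · rw [hXBdef, Finset.mem_biUnion] at hjB
      obtain ⟨e', he'B, hje'⟩ := hjB
      exact ⟨e', he'B, hsing e'.2 (hMmin e' (Finset.mem_filter.mp he'B).1) j hje' hjfat⟩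
  -- thin blockers and thin addable edges
  set Bt : Finset (P × Finset R) := B.filter (fun e' => ∀ j ∈ e'.2, v j < t) with hBtdef
  set At : Finset (P × Finset R) := A.filter (fun e => ∀ j ∈ e.2, v j < t) with hAtdef
  have hFatcard : (Fat.card : ℝ) ≤ (B.card : ℝ) - (Bt.card : ℝ) := by
    have hinj : ∀ j ∈ Fat, ∃ e' ∈ B \ Bt, e'.2 = {j} := by
      intro j hj
      obtain ⟨e', he'B, he'sing⟩ := hfatB j hj
      refine ⟨e', Finset.mem_sdiff.mpr ⟨he'B, ?_⟩, he'sing⟩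
      rw [hBtdef, Finset.mem_filter]
      push_neg
      intro _
      refine ⟨j, by rw [he'sing]; simp, ?_⟩
      exact (Finset.mem_filter.mp hj).2
    have hcard : Fat.card ≤ (B \ Bt).card := by
      have himg : Fat.image (fun j => ({j} : Finset R)) ⊆ (B \ Bt).image Prod.snd := by
        intro D hD
        obtain ⟨j, hj, rfl⟩ := Finset.mem_image.mp hD
        obtain ⟨e', he', heq⟩ := hinj j hj
        exact Finset.mem_image.mpr ⟨e', he', heq⟩
      calc Fat.card = (Fat.image (fun j => ({j} : Finset R))).card :=
            (Finset.card_image_of_injective _ Finset.singleton_injective).symm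
      _ ≤ ((B \ Bt).image Prod.snd).card := Finset.card_le_card himg
      _ ≤ (B \ Bt).card := Finset.card_image_le
    have hBtsub : Bt ⊆ B := Finset.filter_subset _ _
    have hsd := Finset.card_sdiff_of_subset hBtsub
    have hle := Finset.card_le_card hBtsub
    have : (Fat.card : ℝ) ≤ ((B \ Bt).card : ℝ) := by exact_mod_cast hcard
    rw [hsd] at this
    rw [Nat.cast_sub hle] at this
    exact this
  -- the players of interest
  set S : Finset P := insert i₀ (B.image Prod.fst) with hSdef
  have hScard : S.card = B.card + 1 := by
    rw [hSdef, Finset.card_insert_of_notMem, Finset.card_image_of_injOn]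
    · intro e₁ h₁ e₂ h₂ heq
      by_contra hne
      exact (hM_match e₁ (Finset.filter_subset _ _ h₁) e₂ (Finset.filter_subset _ _ h₂) hne).1 heq
    · intro hmem
      obtain ⟨e', he'B, heq⟩ := Finset.mem_image.mp hmem
      exact hi₀ e' (Finset.filter_subset _ _ he'B) heq
  have hmemS : ∀ i ∈ S, (i = i₀ ∨ ∃ e' ∈ B, e'.1 = i) := by
    intro i hi
    rw [hSdef, Finset.mem_insert] at hi
    rcases hi with h | h
    · exact Or.inl h
    · obtain ⟨e', he', heq⟩ := Finset.mem_image.mp h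
      exact Or.inr ⟨e', he', heq⟩
  set thinC : Finset (Finset R) := Finset.univ.filter (fun C => C ∩ Fat = ∅) with hthinCdef
  -- Step 1: mass of fat-avoiding configurations
  have hmass : (Bt.card : ℝ) + 1 ≤ ∑ i ∈ S, ∑ C ∈ thinC, x i C := by
    have hm1 : ∀ i, ∑ C ∈ Finset.univ.filter (fun C : Finset R => ¬ C ∩ Fat = ∅), x i C
        ≤ ∑ j ∈ Fat, ∑ C ∈ Finset.univ.filter (fun C : Finset R => j ∈ C), x i C := by
      intro i
      have step1 : ∀ C : Finset R, (if ¬ C ∩ Fat = ∅ then x i C else 0)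
          ≤ ((Fat.filter (fun j => j ∈ C)).card : ℝ) * x i C := by
        intro C
        by_cases h : C ∩ Fat = ∅
        · rw [if_neg (not_not.mpr h)]
          exact mul_nonneg (Nat.cast_nonneg _) (hx0 i C)
        · rw [if_pos h]
          have hne : (Fat.filter (fun j => j ∈ C)).Nonempty := by
            rw [Finset.filter_mem_eq_inter]
            rw [← Finset.not_nonempty_iff_eq_empty, not_not] at h
            obtain ⟨j, hj⟩ := h
            rw [Finset.mem_inter] at hj
            exact ⟨j, Finset.mem_inter.mpr ⟨hj.2, hj.1⟩⟩
          have h1 : 1 ≤ ((Fat.filter (fun j => j ∈ C)).card : ℝ) := by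
            have := Finset.card_pos.mpr hne
            exact_mod_cast this
          nlinarith [hx0 i C]
      calc ∑ C ∈ Finset.univ.filter (fun C : Finset R => ¬ C ∩ Fat = ∅), x i C
          = ∑ C : Finset R, if ¬ C ∩ Fat = ∅ then x i C else 0 := Finset.sum_filter _ _
        _ ≤ ∑ C : Finset R, ((Fat.filter (fun j => j ∈ C)).card : ℝ) * x i C :=
            Finset.sum_le_sum fun C _ => step1 C
        _ = ∑ C : Finset R, ∑ j ∈ Fat, (if j ∈ C then x i C else 0) := by
            refine Finset.sum_congr rfl fun C _ => ?_
            rw [← Finset.sum_filter, Finset.sum_const, nsmul_eq_mul]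
        _ = ∑ j ∈ Fat, ∑ C : Finset R, (if j ∈ C then x i C else 0) := Finset.sum_comm
        _ = ∑ j ∈ Fat, ∑ C ∈ Finset.univ.filter (fun C : Finset R => j ∈ C), x i C :=
            Finset.sum_congr rfl fun j _ => (Finset.sum_filter _ _).symm
    have hm2 : ∑ i ∈ S, ∑ C ∈ Finset.univ.filter (fun C : Finset R => ¬ C ∩ Fat = ∅), x i C
        ≤ (Fat.card : ℝ) := by
      calc ∑ i ∈ S, ∑ C ∈ Finset.univ.filter (fun C : Finset R => ¬ C ∩ Fat = ∅), x i C
          ≤ ∑ i ∈ S, ∑ j ∈ Fat, ∑ C ∈ Finset.univ.filter (fun C : Finset R => j ∈ C), x i C :=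
            Finset.sum_le_sum fun i _ => hm1 i
        _ = ∑ j ∈ Fat, ∑ i ∈ S, ∑ C ∈ Finset.univ.filter (fun C : Finset R => j ∈ C), x i C :=
            Finset.sum_comm
        _ ≤ ∑ _j ∈ Fat, (1:ℝ) := by
            refine Finset.sum_le_sum fun j _ => ?_
            calc ∑ i ∈ S, ∑ C ∈ Finset.univ.filter (fun C : Finset R => j ∈ C), x i C
                ≤ ∑ i : P, ∑ C ∈ Finset.univ.filter (fun C : Finset R => j ∈ C), x i C :=
                  Finset.sum_le_sum_of_subset_of_nonneg (Finset.subset_univ S)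
                    (fun i _ _ => Finset.sum_nonneg fun C _ => hx0 i C)
              _ ≤ 1 := hxcap j
        _ = (Fat.card : ℝ) := by rw [Finset.sum_const, nsmul_eq_mul, mul_one]
    have hm3 : (S.card : ℝ) ≤ ∑ i ∈ S, ∑ C ∈ thinC, x i C
        + ∑ i ∈ S, ∑ C ∈ Finset.univ.filter (fun C : Finset R => ¬ C ∩ Fat = ∅), x i C := by
      rw [← Finset.sum_add_distrib]
      calc (S.card : ℝ) = ∑ _i ∈ S, (1:ℝ) := by rw [Finset.sum_const, nsmul_eq_mul, mul_one]
        _ ≤ _ := by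
            refine Finset.sum_le_sum fun i _ => ?_
            have hcov := hxcov i
            rw [← Finset.sum_filter_add_sum_filter_not Finset.univ
              (fun C : Finset R => C ∩ Fat = ∅) (x i)] at hcov
            exact hcov
    have hSc : (S.card : ℝ) = (B.card : ℝ) + 1 := by rw [hScard]; push_cast; ring
    linarith
  -- Step 2: each fat-avoiding configuration pays at least 1
  have hpay : ∑ i ∈ S, ∑ C ∈ thinC, x i C ≤
      ∑ i ∈ S, ∑ C : Finset R, x i C * Yf v t (C ∩ Xt) := by
    refine Finset.sum_le_sum fun i hiS => ?_
    calc ∑ C ∈ thinC, x i C ≤ ∑ C ∈ thinC, x i C * Yf v t (C ∩ Xt) := by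
          refine Finset.sum_le_sum fun C hC => ?_
          rcases eq_or_lt_of_le (hx0 i C) with h0 | hpos
          · rw [← h0, zero_mul]
          · have hCval : C ⊆ Rof i ∧ τ ≤ ∑ j ∈ C, v j := by
              by_contra h
              have := hxvan i C h
              linarith
            have hCfat : C ∩ Fat = ∅ := (Finset.mem_filter.mp hC).2
            have hsmallC := hsmall i (hmemS i hiS) C hCval.1
            have hsplit : ∑ j ∈ C ∩ X, v j + ∑ j ∈ C \ X, v j = ∑ j ∈ C, v j :=
              Finset.sum_inter_add_sum_sdiff C X v
            have hXX : C ∩ X = C ∩ Xt := by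
              ext j
              rw [Finset.mem_inter, Finset.mem_inter, hXtdef, Finset.mem_filter]
              constructor
              · rintro ⟨hjC, hjX⟩
                refine ⟨hjC, hjX, ?_⟩
                by_contra hge
                push_neg at hge
                have hjFat : j ∈ C ∩ Fat := by
                  rw [Finset.mem_inter, hFatdef, Finset.mem_filter]
                  exact ⟨hjC, hjX, hge⟩
                rw [hCfat] at hjFat
                simp at hjFat
              · rintro ⟨hjC, hjX, _⟩
                exact ⟨hjC, hjX⟩
            have hval : 17*t/6 ≤ ∑ j ∈ C ∩ Xt, v j := by
              rw [← hXX]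
              have := hCval.2
              rw [htτ] at this
              linarith
            have hthinp : ∀ j ∈ C ∩ Xt, v j ≤ t := by
              intro j hj
              have := Finset.mem_inter.mp hj
              have := (Finset.mem_filter.mp (by rw [hXtdef] at this; exact this.2)).2
              linarith
            have h1Y := payment hv ht hthinp hval
            nlinarith [h1Y, hpos]
      _ ≤ ∑ C : Finset R, x i C * Yf v t (C ∩ Xt) :=
          Finset.sum_le_sum_of_subset_of_nonneg (Finset.filter_subset _ _)
            fun C _ _ => mul_nonneg (hx0 i C) (Yf_nonneg hv ht _)
  -- Step 3: total payment is at most the weight of Xt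
  have hswap : ∑ i ∈ S, ∑ C : Finset R, x i C * Yf v t (C ∩ Xt) ≤ ∑ j ∈ Xt, yw t (v j) := by
    have hYrw : ∀ C : Finset R, Yf v t (C ∩ Xt) = ∑ j ∈ Xt, if j ∈ C then yw t (v j) else 0 := by
      intro C
      rw [Yf_apply, show (C ∩ Xt) = Xt.filter (fun j => j ∈ C) by
        rw [Finset.filter_mem_eq_inter, Finset.inter_comm]]
      exact Finset.sum_filter _ _
    have hstep : ∀ j ∈ Xt,
        ∑ i ∈ S, ∑ C ∈ Finset.univ.filter (fun C : Finset R => j ∈ C), x i C ≤ 1 := by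
      intro j _
      calc ∑ i ∈ S, ∑ C ∈ Finset.univ.filter (fun C : Finset R => j ∈ C), x i C
          ≤ ∑ i : P, ∑ C ∈ Finset.univ.filter (fun C : Finset R => j ∈ C), x i C :=
            Finset.sum_le_sum_of_subset_of_nonneg (Finset.subset_univ S)
              (fun i _ _ => Finset.sum_nonneg fun C _ => hx0 i C)
        _ ≤ 1 := hxcap j
    calc ∑ i ∈ S, ∑ C : Finset R, x i C * Yf v t (C ∩ Xt)
        = ∑ i ∈ S, ∑ C : Finset R, ∑ j ∈ Xt, (if j ∈ C then x i C * yw t (v j) else 0) := by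
          refine Finset.sum_congr rfl fun i _ => Finset.sum_congr rfl fun C _ => ?_
          rw [hYrw C, Finset.mul_sum]
          exact Finset.sum_congr rfl fun j _ => by rw [mul_ite, mul_zero]
      _ = ∑ j ∈ Xt, ∑ i ∈ S, ∑ C : Finset R, (if j ∈ C then x i C * yw t (v j) else 0) := by
          rw [show ∑ i ∈ S, ∑ C : Finset R, ∑ j ∈ Xt, (if j ∈ C then x i C * yw t (v j) else 0)
              = ∑ i ∈ S, ∑ j ∈ Xt, ∑ C : Finset R, (if j ∈ C then x i C * yw t (v j) else 0)
            from Finset.sum_congr rfl fun i _ => Finset.sum_comm]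
          exact Finset.sum_comm
      _ = ∑ j ∈ Xt, (∑ i ∈ S, ∑ C ∈ Finset.univ.filter (fun C : Finset R => j ∈ C), x i C)
            * yw t (v j) := by
          refine Finset.sum_congr rfl fun j _ => ?_
          rw [Finset.sum_mul]
          refine Finset.sum_congr rfl fun i _ => ?_
          rw [Finset.sum_filter, Finset.sum_mul]
          exact Finset.sum_congr rfl fun C _ => by rw [ite_mul, zero_mul]
      _ ≤ ∑ j ∈ Xt, 1 * yw t (v j) :=
          Finset.sum_le_sum fun j hj =>
            mul_le_mul_of_nonneg_right (hstep j hj) (yw_nonneg ht (hv j).le)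
      _ = ∑ j ∈ Xt, yw t (v j) := by
          exact Finset.sum_congr rfl fun j _ => one_mul _
  -- Step 4: the weight of Xt is at most the number of thin blockers
  have hbudget : ∑ j ∈ Xt, yw t (v j) ≤ (Bt.card : ℝ) := by
    set g : (P × Finset R) → Finset (P × Finset R) :=
      fun e => Bt.filter (fun e' => (e'.2 ∩ e.2).Nonempty) with hgdef
    -- any A-edge meeting a thin blocker is thin
    have hAthin : ∀ e' ∈ Bt, ∀ e ∈ A, (e'.2 ∩ e.2).Nonempty → e ∈ At := by
      intro e' he' e heA hmeet
      rw [hAtdef, Finset.mem_filter]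
      refine ⟨heA, ?_⟩
      intro j' hj'
      by_contra hge
      push_neg at hge
      have hsing' := hsing e.2 (hAmin e heA) j' hj' hge
      obtain ⟨j, hj⟩ := hmeet
      rw [Finset.mem_inter] at hj
      have hjj : j = j' := by
        have := hj.2
        rw [hsing'] at this
        simpa using this
      subst hjj
      have := (Finset.mem_filter.mp he').2 j hj.1
      linarith
    -- any M-edge meeting a thin A-edge is a thin blocker
    have hBthin : ∀ e ∈ At, ∀ e'' ∈ M, (e''.2 ∩ e.2).Nonempty → e'' ∈ Bt := by
      intro e heAt e'' he''M hmeet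
      rw [hBtdef, Finset.mem_filter]
      refine ⟨Finset.mem_filter.mpr ⟨he''M, ⟨e, (Finset.mem_filter.mp heAt).1, hmeet⟩⟩, ?_⟩
      intro j' hj'
      by_contra hge
      push_neg at hge
      have hsing' := hsing e''.2 (hMmin e'' he''M) j' hj' hge
      obtain ⟨j, hj⟩ := hmeet
      rw [Finset.mem_inter] at hj
      have hjj : j = j' := by
        have := hj.1
        rw [hsing'] at this
        simpa using this
      subst hjj
      have := (Finset.mem_filter.mp heAt).2 j hj.2
      linarith
    -- the groups g e are pairwise disjoint over At
    have hgdisj : ∀ e₁ ∈ At, ∀ e₂ ∈ At, e₁ ≠ e₂ → Disjoint (g e₁) (g e₂) := by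
      intro e₁ h₁ e₂ h₂ hne
      rw [Finset.disjoint_left]
      intro e' he'1 he'2
      have hc1 := Finset.mem_filter.mp he'1
      have hc2 := Finset.mem_filter.mp he'2
      have he'M : e' ∈ M := Finset.filter_subset _ _ (Finset.filter_subset _ _ hc1.1)
      exact hne (hone e' he'M e₁ (Finset.filter_subset _ _ h₁) e₂
        (Finset.filter_subset _ _ h₂) hc1.2 hc2.2)
    -- Bt is partitioned into the groups
    have hBtbi : Bt = At.biUnion g := by
      ext e'
      simp only [Finset.mem_biUnion]
      constructor
      · intro he'
        have he'B := (Finset.mem_filter.mp he').1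
        obtain ⟨e, heA, hmeet⟩ := (Finset.mem_filter.mp he'B).2
        exact ⟨e, hAthin e' he' e heA hmeet, Finset.mem_filter.mpr ⟨he', hmeet⟩⟩
      · rintro ⟨e, _, he'⟩
        exact (Finset.mem_filter.mp he').1
    -- cover of Xt
    have hcover : Xt ⊆ (At.biUnion (fun e => e.2 \ XB)) ∪ Bt.biUnion (fun e' => e'.2) := by
      intro j hj
      have hjX := (Finset.mem_filter.mp hj).1
      have hjthin := (Finset.mem_filter.mp hj).2
      rw [Finset.mem_union]
      by_cases hjB : j ∈ XB
      · right
        rw [hXBdef, Finset.mem_biUnion] at hjB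
        obtain ⟨e', he'B, hje'⟩ := hjB
        refine Finset.mem_biUnion.mpr ⟨e', ?_, hje'⟩
        rw [hBtdef, Finset.mem_filter]
        refine ⟨he'B, ?_⟩
        intro j' hj'
        by_contra hge
        push_neg at hge
        have hs := hsing e'.2 (hMmin e' (Finset.mem_filter.mp he'B).1) j' hj' hge
        rw [hs] at hje'
        have : j = j' := by simpa using hje'
        subst this
        linarith
      · left
        rw [hXdef, Finset.mem_union] at hjX
        rcases hjX with hjA | hjB'
        · rw [hXAdef, Finset.mem_biUnion] at hjA
          obtain ⟨e, heA, hje⟩ := hjA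
          refine Finset.mem_biUnion.mpr ⟨e, ?_, Finset.mem_sdiff.mpr ⟨hje, hjB⟩⟩
          rw [hAtdef, Finset.mem_filter]
          refine ⟨heA, ?_⟩
          intro j' hj'
          by_contra hge
          push_neg at hge
          have hs := hsing e.2 (hAmin e heA) j' hj' hge
          rw [hs] at hje
          have : j = j' := by simpa using hje
          subst this
          linarith
        · exact absurd hjB' hjB
    -- facts about the members of a group
    have hgmem : ∀ e, ∀ e' ∈ g e, IsMin v t e'.2 ∧ Thin v t e'.2 ∧
        (e'.2 ∩ e.2).Nonempty ∧ e'.2 ⊆ XB := by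
      intro e e' he'
      have h1 := Finset.mem_filter.mp he'
      have h2 := Finset.mem_filter.mp h1.1
      have h3 := Finset.mem_filter.mp h2.1
      refine ⟨hMmin e' h3.1, h2.2, h1.2, ?_⟩
      intro j hj
      rw [hXBdef, Finset.mem_biUnion]
      exact ⟨e', h2.1, hj⟩
    -- per-group bound
    have h6 : ∀ e ∈ At, Yf v t (e.2 \ XB) + ∑ e' ∈ g e, Yf v t e'.2 ≤ ((g e).card : ℝ) := by
      intro e heAt
      have heA := (Finset.mem_filter.mp heAt).1
      have hethin : Thin v t e.2 := (Finset.mem_filter.mp heAt).2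
      have hemin := hAmin e heA
      obtain ⟨e₀, he₀M, hmeet₀⟩ := hblocked e heA
      have he₀ : e₀ ∈ g e := Finset.mem_filter.mpr ⟨hBthin e heAt e₀ he₀M hmeet₀, hmeet₀⟩
      by_cases hk1 : (g e).card = 1
      · obtain ⟨e', hg1⟩ := Finset.card_eq_one.mp hk1
        have he'g : e' ∈ g e := by rw [hg1]; simp
        obtain ⟨hmin', hthin', hmeet', hsub'⟩ := hgmem e e' he'g
        rw [hg1, Finset.sum_singleton, Finset.card_singleton]
        have hsub2 : e.2 \ XB ⊆ e.2 \ e'.2 := Finset.sdiff_subset_sdiff le_rfl hsub'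
        have hmono := Yf_mono hv ht hsub2
        have hT : (e.2 ∩ e'.2).Nonempty := by rwa [Finset.inter_comm]
        have hkey := key_overlap hv ht hemin hethin hmin' hthin' hT
        push_cast
        linarith
      · have hk2 : 2 ≤ (g e).card := by
          have := Finset.card_pos.mpr ⟨e₀, he₀⟩
          omega
        obtain ⟨j₀, hj₀⟩ := hmeet₀
        rw [Finset.mem_inter] at hj₀
        have hj₀XB : j₀ ∈ XB := (hgmem e e₀ he₀).2.2.2 hj₀.1
        have hssub : e.2 \ XB ⊂ e.2 := by
          refine (Finset.ssubset_iff_of_subset Finset.sdiff_subset).mpr ?_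
          exact ⟨j₀, hj₀.2, by simp [hj₀XB]⟩
        have hval : ∑ j ∈ e.2 \ XB, v j < t := hemin.2 _ hssub
        have hY1 : Yf v t (e.2 \ XB) ≤ 2/5 := by
          have hYv := Yf_le_val (v := v) ht (e.2 \ XB)
          have h25 : 2*(∑ j ∈ e.2 \ XB, v j)/(5*t) ≤ 2/5 := by
            rw [div_le_div_iff₀ (by positivity) (by norm_num)]
            nlinarith
          linarith
        have hY2 : ∑ e' ∈ g e, Yf v t e'.2 ≤ (2/3) * ((g e).card : ℝ) := by
          calc ∑ e' ∈ g e, Yf v t e'.2 ≤ ∑ _e' ∈ g e, (2/3:ℝ) :=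
                Finset.sum_le_sum fun e' he' =>
                  (edge_le hv ht (hgmem e e' he').1 (hgmem e e' he').2.1).1
            _ = (2/3) * ((g e).card : ℝ) := by
                rw [Finset.sum_const, nsmul_eq_mul]; ring
        have hk2' : (2:ℝ) ≤ ((g e).card : ℝ) := by exact_mod_cast hk2
        linarith
    -- put everything together
    have h1 : ∑ j ∈ Xt, yw t (v j) ≤
        ∑ j ∈ (At.biUnion (fun e => e.2 \ XB)) ∪ Bt.biUnion (fun e' => e'.2), yw t (v j) :=
      Finset.sum_le_sum_of_subset_of_nonneg hcover fun j _ _ => yw_nonneg ht (hv j).le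
    have h2 : ∑ j ∈ (At.biUnion (fun e => e.2 \ XB)) ∪ Bt.biUnion (fun e' => e'.2), yw t (v j)
        ≤ ∑ j ∈ At.biUnion (fun e => e.2 \ XB), yw t (v j)
          + ∑ j ∈ Bt.biUnion (fun e' => e'.2), yw t (v j) := by
      have hui := Finset.sum_union_inter (s₁ := At.biUnion (fun e => e.2 \ XB))
        (s₂ := Bt.biUnion (fun e' => e'.2)) (f := fun j => yw t (v j))
      have hnn : 0 ≤ ∑ j ∈ (At.biUnion (fun e => e.2 \ XB)) ∩ Bt.biUnion (fun e' => e'.2),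
          yw t (v j) := Finset.sum_nonneg fun j _ => yw_nonneg ht (hv j).le
      linarith
    have h3 : ∑ j ∈ At.biUnion (fun e => e.2 \ XB), yw t (v j)
        = ∑ e ∈ At, Yf v t (e.2 \ XB) := by
      refine Finset.sum_biUnion ?_
      intro e₁ h₁ e₂ h₂ hne
      have hd := hA_disj e₁ (Finset.filter_subset _ _ (Finset.mem_coe.mp h₁))
        e₂ (Finset.filter_subset _ _ (Finset.mem_coe.mp h₂)) hne
      exact Finset.disjoint_of_subset_left Finset.sdiff_subset
        (Finset.disjoint_of_subset_right Finset.sdiff_subset hd)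
    have h4 : ∑ j ∈ Bt.biUnion (fun e' => e'.2), yw t (v j) = ∑ e' ∈ Bt, Yf v t e'.2 := by
      refine Finset.sum_biUnion ?_
      intro e₁ h₁ e₂ h₂ hne
      have h₁' : e₁ ∈ M :=
        Finset.filter_subset _ _ (Finset.filter_subset _ _ (Finset.mem_coe.mp h₁))
      have h₂' : e₂ ∈ M :=
        Finset.filter_subset _ _ (Finset.filter_subset _ _ (Finset.mem_coe.mp h₂))
      exact (hM_match e₁ h₁' e₂ h₂' hne).2
    have h5 : ∑ e' ∈ Bt, Yf v t e'.2 = ∑ e ∈ At, ∑ e' ∈ g e, Yf v t e'.2 := by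
      rw [hBtbi]
      refine Finset.sum_biUnion ?_
      intro e₁ h₁ e₂ h₂ hne
      exact hgdisj e₁ (Finset.mem_coe.mp h₁) e₂ (Finset.mem_coe.mp h₂) hne
    have hcards : (Bt.card : ℝ) = ∑ e ∈ At, ((g e).card : ℝ) := by
      rw [hBtbi, Finset.card_biUnion hgdisj]
      push_cast
      rfl
    have h7 : ∑ e ∈ At, Yf v t (e.2 \ XB) + ∑ e ∈ At, ∑ e' ∈ g e, Yf v t e'.2
        ≤ ∑ e ∈ At, ((g e).card : ℝ) := by
      rw [← Finset.sum_add_distrib]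
      exact Finset.sum_le_sum h6
    rw [hcards]
    calc ∑ j ∈ Xt, yw t (v j)
        ≤ ∑ j ∈ At.biUnion (fun e => e.2 \ XB), yw t (v j)
          + ∑ j ∈ Bt.biUnion (fun e' => e'.2), yw t (v j) := le_trans h1 h2
      _ = ∑ e ∈ At, Yf v t (e.2 \ XB) + ∑ e ∈ At, ∑ e' ∈ g e, Yf v t e'.2 := by
          rw [h3, h4, h5]
      _ ≤ ∑ e ∈ At, ((g e).card : ℝ) := h7
  linarith
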